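/- For all real u with 0 ≤ u ≤ 4·log 2, one has log(sech(u/2)) ≤ −u²/12. -/
import Mathlib

open Real

lemma quartic_le_exp_of_nonneg' {x : ℝ} (hx : 0 ≤ x) :
    1 + x + x ^ 2 / 2 + x ^ 3 / 6 + x ^ 4 / 24 ≤ Real.exp x := by
  have h := Real.sum_le_exp_of_nonneg hx 5
  simp [Finset.sum_range_succ, Nat.factorial] at h
  linarith

lemma cosh_ge_one_add_half_sq {x : ℝ} (hx : 0 ≤ x) :
    1 + x ^ 2 / 2 ≤ Real.cosh x := by
  have hE := quartic_le_exp_of_nonneg' hx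
  have hEpos : 0 < Real.exp x := Real.exp_pos x
  have hIpos : 0 < Real.exp (-x) := Real.exp_pos _
  have hEI : Real.exp x * Real.exp (-x) = 1 := by
    rw [← Real.exp_add]; simp
  rw [Real.cosh_eq]
  rw [le_div_iff₀ (by norm_num : (0:ℝ) < 2)]
  nlinarith [sq_nonneg (Real.exp x - (1 + x + x ^ 2 / 2 + x ^ 3 / 6 + x ^ 4 / 24)),
    mul_pos hEpos hIpos, sq_nonneg x, pow_nonneg hx 3, pow_nonneg hx 4,
    pow_nonneg hx 5, pow_nonneg hx 6, pow_nonneg hx 7, pow_nonneg hx 8,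
    mul_le_mul_of_nonneg_right hE hIpos.le]

theorem log_sech_le (u : ℝ) (hu0 : 0 ≤ u) (hu1 : u ≤ 4 * Real.log 2) :
    Real.log (1 / Real.cosh (u / 2)) ≤ -u ^ 2 / 12 := by
  set x : ℝ := u / 2 with hxdef
  have hx0 : 0 ≤ x := by positivity
  have hlog2 : Real.log 2 < 0.6931471808 := Real.log_two_lt_d9
  have hx1 : x ≤ 1.3862943616 := by
    rw [hxdef]; nlinarith
  have hcoshpos : 0 < Real.cosh x := Real.cosh_pos x
  -- reduce to exp (x^2/3) ≤ cosh x
  have key : Real.exp (x ^ 2 / 3) ≤ Real.cosh x := by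
    set t : ℝ := x ^ 2 / 3 with htdef
    have ht0 : 0 ≤ t := by positivity
    have ht1 : t ≤ 0.6406470623 := by
      rw [htdef]; nlinarith
    have hexp : Real.exp t ≤ 1 + t + t ^ 2 / 2 + 2 * t ^ 3 / 9 := by
      have h := Real.exp_bound' ht0 (by linarith) (n := 3) (by norm_num)
      simp [Finset.sum_range_succ, Nat.factorial] at h
      calc Real.exp t ≤ _ := h
        _ ≤ 1 + t + t ^ 2 / 2 + 2 * t ^ 3 / 9 := by ring_nf; nlinarith [sq_nonneg t]
    have hcosh := cosh_ge_one_add_half_sq hx0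
    have hx2 : x ^ 2 = 3 * t := by rw [htdef]; ring
    nlinarith [sq_nonneg t, pow_nonneg ht0 3]
  have hlog : x ^ 2 / 3 ≤ Real.log (Real.cosh x) :=
    (Real.le_log_iff_exp_le hcoshpos).2 key
  have : Real.log (1 / Real.cosh x) = -Real.log (Real.cosh x) := by
    rw [one_div, Real.log_inv]
  rw [this]
  have hux : x ^ 2 / 3 = u ^ 2 / 12 := by rw [hxdef]; ring
  linarith [hlog, hux ▸ hlog]
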